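/- With c_n and s(x) as defined by the recurrence 4(n+4)c_{n+5}+8(n+2)c_{n+4}+(n+3)c_{n+3}+(4n+7)c_{n+2}+(5n+4)c_{n+1}+2n c_n=0 with initial data c_0=0, c_1=1, c_2=2, c_3=-1/8, c_4=-1/2, the generating function satisfies the algebraic relation s(x)² · (4 + x² + 2x³ + x⁴) = 4x²(2x+1)² in ℚ[[x]]. -/

import Mathlib

open PowerSeries

lemma stmt7_coeffXp (a : ℚ) {j n : ℕ} (h : j ≤ n) (f : ℚ⟦X⟧) :
    coeff (R := ℚ) n (C (R := ℚ) a * X^j * f) = a * coeff (R := ℚ) (n-j) f := by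
  rw [mul_assoc, coeff_C_mul, coeff_X_pow_mul', if_pos h]

noncomputable def sA : ℚ⟦X⟧ :=
  C (R := ℚ) 4 * X^1 + C (R := ℚ) 8 * X^2 + C (R := ℚ) 1 * X^3 + C (R := ℚ) 4 * X^4 + C (R := ℚ) 5 * X^5 + C (R := ℚ) 2 * X^6
noncomputable def sB : ℚ⟦X⟧ :=
  C (R := ℚ) (-4) * X^0 + C (R := ℚ) (-16) * X^1 + C (R := ℚ) (-1) * X^3 + C (R := ℚ) (-1) * X^4
noncomputable def sQ : ℚ⟦X⟧ := C (R := ℚ) 4 * X^0 + C (R := ℚ) 1 * X^2 + C (R := ℚ) 2 * X^3 + C (R := ℚ) 1 * X^4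
noncomputable def sR : ℚ⟦X⟧ := C (R := ℚ) 4 * X^2 + C (R := ℚ) 16 * X^3 + C (R := ℚ) 16 * X^4
noncomputable def sN : ℚ⟦X⟧ :=
  C (R := ℚ) 8 * X^0 + C (R := ℚ) 32 * X^1 + C (R := ℚ) 2 * X^2 + C (R := ℚ) 12 * X^3 + C (R := ℚ) 18 * X^4 + C (R := ℚ) 8 * X^5

lemma stmt7_dXpow (j : ℕ) : d⁄dX ℚ ((X:ℚ⟦X⟧)^j) = (j:ℚ⟦X⟧) * X^(j-1) := by
  rw [Derivation.leibniz_pow, derivative_X, smul_eq_mul, mul_one, nsmul_eq_mul]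

lemma stmt7_dCXp (a : ℚ) (j : ℕ) : d⁄dX ℚ (C (R := ℚ) a * (X:ℚ⟦X⟧)^j) = C (R := ℚ) (a * j) * X^(j-1) := by
  rw [Derivation.leibniz, derivative_C, smul_zero, add_zero, smul_eq_mul, stmt7_dXpow, map_mul,
    map_natCast]
  ring

lemma stmt7_dsQ : d⁄dX ℚ sQ = C (R := ℚ) 2 * X^1 + C (R := ℚ) 6 * X^2 + C (R := ℚ) 4 * X^3 := by
  rw [sQ, map_add, map_add, map_add, stmt7_dCXp, stmt7_dCXp, stmt7_dCXp, stmt7_dCXp]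
  norm_num

lemma stmt7_dsR : d⁄dX ℚ sR = C (R := ℚ) 8 * X^1 + C (R := ℚ) 48 * X^2 + C (R := ℚ) 64 * X^3 := by
  rw [sR, map_add, map_add, stmt7_dCXp, stmt7_dCXp, stmt7_dCXp]
  norm_num

lemma stmt7_hid1 : sA * (d⁄dX ℚ sQ) - 2 * sB * sQ = sN * sQ := by
  rw [stmt7_dsQ]
  simp only [sA, sB, sQ, sN, map_neg, map_ofNat, map_one]
  ring

lemma stmt7_hid2 : sA * (d⁄dX ℚ sR) = sN * sR := by
  rw [stmt7_dsR]
  simp only [sA, sR, sN, map_neg, map_ofNat, map_one]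
  ring

set_option maxHeartbeats 2000000 in
/-- The generating function `s(x)` of the sequence defined by the stated recurrence and
initial data satisfies the algebraic relation `s(x)²·(4 + x² + 2x³ + x⁴) = 4x²(2x+1)²`. -/
theorem stmt_7 (c : ℕ → ℚ) (h0 : c 0 = 0) (h1 : c 1 = 1) (h2 : c 2 = 2)
    (h3 : c 3 = -1/8) (h4 : c 4 = -1/2)
    (hrec : ∀ n : ℕ,
      4 * ((n : ℚ) + 4) * c (n + 5) + 8 * ((n : ℚ) + 2) * c (n + 4)
        + ((n : ℚ) + 3) * c (n + 3) + (4 * (n : ℚ) + 7) * c (n + 2)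
        + (5 * (n : ℚ) + 4) * c (n + 1) + 2 * (n : ℚ) * c n = 0) :
    (PowerSeries.mk c) ^ 2 * (4 + X ^ 2 + 2 * X ^ 3 + X ^ 4 : PowerSeries ℚ)
      = 4 * X ^ 2 * (2 * X + 1) ^ 2 := by
  have hc5 : c 5 = -77/128 := by
    have := hrec 0
    push_cast at this
    linarith
  -- the first-order linear ODE satisfied by the generating function
  have hODE : sA * d⁄dX ℚ (mk c) + sB * (mk c) = 0 := by
    ext m
    rw [map_zero]
    obtain _|_|_|_|_|_|m := m
    · simp [sA, sB, coeff_mul, Finset.Nat.sum_antidiagonal_eq_sum_range_succ_mk,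
        Finset.sum_range_succ, coeff_C_mul, coeff_X_pow, coeff_X, coeff_one, coeff_derivative,
        coeff_mk, h0, h1, h2, h3, h4, hc5] <;> norm_num
    · simp [sA, sB, coeff_mul, Finset.Nat.sum_antidiagonal_eq_sum_range_succ_mk,
        Finset.sum_range_succ, coeff_C_mul, coeff_X_pow, coeff_X, coeff_one, coeff_derivative,
        coeff_mk, h0, h1, h2, h3, h4, hc5] <;> norm_num
    · simp [sA, sB, coeff_mul, Finset.Nat.sum_antidiagonal_eq_sum_range_succ_mk,
        Finset.sum_range_succ, coeff_C_mul, coeff_X_pow, coeff_X, coeff_one, coeff_derivative,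
        coeff_mk, h0, h1, h2, h3, h4, hc5] <;> norm_num
    · simp [sA, sB, coeff_mul, Finset.Nat.sum_antidiagonal_eq_sum_range_succ_mk,
        Finset.sum_range_succ, coeff_C_mul, coeff_X_pow, coeff_X, coeff_one, coeff_derivative,
        coeff_mk, h0, h1, h2, h3, h4, hc5] <;> norm_num
    · simp [sA, sB, coeff_mul, Finset.Nat.sum_antidiagonal_eq_sum_range_succ_mk,
        Finset.sum_range_succ, coeff_C_mul, coeff_X_pow, coeff_X, coeff_one, coeff_derivative,
        coeff_mk, h0, h1, h2, h3, h4, hc5] <;> norm_num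
    · simp [sA, sB, coeff_mul, Finset.Nat.sum_antidiagonal_eq_sum_range_succ_mk,
        Finset.sum_range_succ, coeff_C_mul, coeff_X_pow, coeff_X, coeff_one, coeff_derivative,
        coeff_mk, h0, h1, h2, h3, h4, hc5] <;> norm_num
    · -- general coefficient, index m+6
      show coeff (R := ℚ) (m+6) (sA * d⁄dX ℚ (mk c) + sB * (mk c)) = 0
      simp only [sA, sB, add_mul, map_add]
      rw [stmt7_coeffXp 4 (by omega), stmt7_coeffXp 8 (by omega), stmt7_coeffXp 1 (by omega),
        stmt7_coeffXp 4 (by omega), stmt7_coeffXp 5 (by omega), stmt7_coeffXp 2 (by omega),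
        stmt7_coeffXp (-4) (by omega), stmt7_coeffXp (-16) (by omega),
        stmt7_coeffXp (-1) (by omega), stmt7_coeffXp (-1) (by omega)]
      simp only [show m+6-1 = m+5 from by omega, show m+6-2 = m+4 from by omega,
        show m+6-3 = m+3 from by omega, show m+6-4 = m+2 from by omega,
        show m+6-5 = m+1 from by omega, show m+6-6 = m from by omega, Nat.sub_zero,
        coeff_derivative, coeff_mk, show m+5+1 = m+6 from by omega,
        show m+4+1 = m+5 from by omega, show m+3+1 = m+4 from by omega,
        show m+2+1 = m+3 from by omega, show m+1+1 = m+2 from by omega]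
      have H := hrec (m+1)
      simp only [show m+1+5 = m+6 from by omega, show m+1+4 = m+5 from by omega,
        show m+1+3 = m+4 from by omega, show m+1+2 = m+3 from by omega,
        show m+1+1 = m+2 from by omega] at H
      push_cast at H ⊢
      linear_combination H
  set g : ℚ⟦X⟧ := mk c * mk c * sQ - sR with hgdef
  have hdg : d⁄dX ℚ g = mk c * mk c * (d⁄dX ℚ sQ)
      + sQ * (mk c * d⁄dX ℚ (mk c) + mk c * d⁄dX ℚ (mk c)) - d⁄dX ℚ sR := by
    rw [hgdef, map_sub, Derivation.leibniz, Derivation.leibniz]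
    simp only [smul_eq_mul]
  have hg : sA * d⁄dX ℚ g = sN * g := by
    rw [hdg, hgdef]
    linear_combination (2 * sQ * (mk c)) * hODE + (mk c * mk c) * stmt7_hid1 - stmt7_hid2
  have key : ∀ n, coeff (R := ℚ) n g = 0 := by
    intro n
    induction n using Nat.strong_induction_on with
    | _ n ih =>
      obtain _|_|_|_|_|_|k := n
      · rw [hgdef]
        simp [sQ, sR, coeff_mul, Finset.Nat.sum_antidiagonal_eq_sum_range_succ_mk,
          Finset.sum_range_succ, coeff_C_mul, coeff_X_pow, coeff_X, coeff_one, coeff_mk,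
          h0, h1, h2, h3, h4, hc5] <;> norm_num
      · rw [hgdef]
        simp [sQ, sR, coeff_mul, Finset.Nat.sum_antidiagonal_eq_sum_range_succ_mk,
          Finset.sum_range_succ, coeff_C_mul, coeff_X_pow, coeff_X, coeff_one, coeff_mk,
          h0, h1, h2, h3, h4, hc5] <;> norm_num
      · rw [hgdef]
        simp [sQ, sR, coeff_mul, Finset.Nat.sum_antidiagonal_eq_sum_range_succ_mk,
          Finset.sum_range_succ, coeff_C_mul, coeff_X_pow, coeff_X, coeff_one, coeff_mk,
          h0, h1, h2, h3, h4, hc5] <;> norm_num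
      · rw [hgdef]
        simp [sQ, sR, coeff_mul, Finset.Nat.sum_antidiagonal_eq_sum_range_succ_mk,
          Finset.sum_range_succ, coeff_C_mul, coeff_X_pow, coeff_X, coeff_one, coeff_mk,
          h0, h1, h2, h3, h4, hc5] <;> norm_num
      · rw [hgdef]
        simp [sQ, sR, coeff_mul, Finset.Nat.sum_antidiagonal_eq_sum_range_succ_mk,
          Finset.sum_range_succ, coeff_C_mul, coeff_X_pow, coeff_X, coeff_one, coeff_mk,
          h0, h1, h2, h3, h4, hc5] <;> norm_num
      · rw [hgdef]
        simp [sQ, sR, coeff_mul, Finset.Nat.sum_antidiagonal_eq_sum_range_succ_mk,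
          Finset.sum_range_succ, coeff_C_mul, coeff_X_pow, coeff_X, coeff_one, coeff_mk,
          h0, h1, h2, h3, h4, hc5] <;> norm_num
      · -- inductive step at index k+6
        have H := congrArg (coeff (R := ℚ) (k+6)) hg
        simp only [sA, sN, add_mul, map_add] at H
        rw [stmt7_coeffXp 4 (by omega), stmt7_coeffXp 8 (by omega), stmt7_coeffXp 1 (by omega),
          stmt7_coeffXp 4 (by omega), stmt7_coeffXp 5 (by omega), stmt7_coeffXp 2 (by omega),
          stmt7_coeffXp 8 (by omega), stmt7_coeffXp 32 (by omega), stmt7_coeffXp 2 (by omega),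
          stmt7_coeffXp 12 (by omega), stmt7_coeffXp 18 (by omega),
          stmt7_coeffXp 8 (by omega)] at H
        simp only [show k+6-1 = k+5 from by omega, show k+6-2 = k+4 from by omega,
          show k+6-3 = k+3 from by omega, show k+6-4 = k+2 from by omega,
          show k+6-5 = k+1 from by omega, show k+6-6 = k from by omega, Nat.sub_zero,
          coeff_derivative, show k+5+1 = k+6 from by omega, show k+4+1 = k+5 from by omega,
          show k+3+1 = k+4 from by omega, show k+2+1 = k+3 from by omega,
          show k+1+1 = k+2 from by omega] at H
        rw [ih (k+1) (by omega), ih (k+2) (by omega), ih (k+3) (by omega), ih (k+4) (by omega),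
          ih (k+5) (by omega)] at H
        push_cast at H
        have hx : ((4:ℚ) * k + 16) * coeff (R := ℚ) (k+6) g = 0 := by linear_combination H
        have hnz : ((4:ℚ) * k + 16) ≠ 0 := by positivity
        exact (mul_eq_zero.mp hx).resolve_left hnz
  have hgz : mk c * mk c * sQ = sR := by
    rw [← sub_eq_zero, ← hgdef]
    ext n
    rw [map_zero]
    exact key n
  have eQ : (4 + X ^ 2 + 2 * X ^ 3 + X ^ 4 : ℚ⟦X⟧) = sQ := by
    simp only [sQ, map_ofNat, map_one]
    ring
  have eR : (4 * X ^ 2 * (2 * X + 1) ^ 2 : ℚ⟦X⟧) = sR := by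
    simp only [sR, map_ofNat]
    ring
  rw [eQ, eR, pow_two]
  exact hgz
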